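/- Let A be a cDFA over alphabet Σ with state set Q, start state q0 and transition function δ, and let D₁,…,Dₙ ⊆ Σ be nonempty finite domains. For every i ∈ [1,n] and ℓ ∈ Dᵢ, the minimum of cost(q0,σ) over all domain-consistent strings σ of length n with σᵢ = ℓ equals the minimum over all q ∈ Q of preMin(i−1,q) + inc + sufMin(i+1,q′), where δ(q,ℓ) = (q′,inc). -/
import Mathlib


/-- A counter-DFA over state type `Q` and alphabet `σ`: a start state and a total
transition function returning the successor state and the counter increment. -/
structure CDFA (Q : Type*) (σ : Type*) where
  q0 : Q
  δ : Q → σ → Q × ℕ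

namespace CDFA

variable {Q σ : Type*}

/-- The state reached from `q` after consuming a string. -/
def run (A : CDFA Q σ) : Q → List σ → Q
  | q, [] => q
  | q, ℓ :: w => A.run (A.δ q ℓ).1 w

/-- The total counter increase from state `q` upon consuming a string. -/
def cost (A : CDFA Q σ) : Q → List σ → ℕ
  | _, [] => 0
  | q, ℓ :: w => (A.δ q ℓ).2 + A.cost (A.δ q ℓ).1 w

end CDFA

namespace CDFA

variable {Q σ : Type*}

/-- `preMin A D i hi q` : the minimum cost (in `ℕ ∪ {∞}`) of a domain-consistent
prefix string of length `i` leading from the start state to state `q`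
(`∞` if no such string reaches `q`). -/
noncomputable def preMin (A : CDFA Q σ) {n : ℕ} (D : Fin n → Finset σ)
    (i : ℕ) (hi : i ≤ n) (q : Q) : ℕ∞ :=
  sInf {c : ℕ∞ | ∃ s : Fin i → σ, (∀ j, s j ∈ D (Fin.castLE hi j)) ∧
    A.run A.q0 (List.ofFn s) = q ∧ (A.cost A.q0 (List.ofFn s) : ℕ∞) = c}

/-- `preMax A D i hi q` : the maximum cost (in `ℕ ∪ {−∞}`) of a domain-consistent
prefix string of length `i` leading from the start state to state `q`
(`−∞` if no such string reaches `q`). -/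
noncomputable def preMax (A : CDFA Q σ) {n : ℕ} (D : Fin n → Finset σ)
    (i : ℕ) (hi : i ≤ n) (q : Q) : WithBot ℕ :=
  sSup {c : WithBot ℕ | ∃ s : Fin i → σ, (∀ j, s j ∈ D (Fin.castLE hi j)) ∧
    A.run A.q0 (List.ofFn s) = q ∧ (A.cost A.q0 (List.ofFn s) : WithBot ℕ) = c}

/-- `sufMin A D i q` : the minimum cost of a domain-consistent suffix string for
positions `i, …, n−1` (0-based), starting from state `q`. -/
noncomputable def sufMin (A : CDFA Q σ) {n : ℕ} (D : Fin n → Finset σ)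
    (i : ℕ) (q : Q) : ℕ :=
  sInf {c : ℕ | ∃ s : Fin (n - i) → σ,
    (∀ j : Fin (n - i), s j ∈ D ⟨i + j.val, by have := j.isLt; omega⟩) ∧
    A.cost q (List.ofFn s) = c}

/-- `sufMax A D i q` : the maximum cost of a domain-consistent suffix string for
positions `i, …, n−1` (0-based), starting from state `q`. -/
noncomputable def sufMax (A : CDFA Q σ) {n : ℕ} (D : Fin n → Finset σ)
    (i : ℕ) (q : Q) : ℕ :=
  sSup {c : ℕ | ∃ s : Fin (n - i) → σ,
    (∀ j : Fin (n - i), s j ∈ D ⟨i + j.val, by have := j.isLt; omega⟩) ∧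
    A.cost q (List.ofFn s) = c}

end CDFA

namespace CDFA
variable {Q σ : Type*}
lemma run_append (A : CDFA Q σ) (q : Q) (u v : List σ) :
    A.run q (u ++ v) = A.run (A.run q u) v := by
  induction u generalizing q <;> simp [run, *]
lemma cost_append (A : CDFA Q σ) (q : Q) (u v : List σ) :
    A.cost q (u ++ v) = A.cost q u + A.cost (A.run q u) v := by
  induction u generalizing q
  · simp [cost, run]
  · simp [run, cost, *]; omega
end CDFA

section Aux
variable {σ : Type*}

def CDFAAux.pref {n : ℕ} (i : Fin n) (s : Fin n → σ) : Fin i.val → σ :=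
  fun j => s (Fin.castLE i.isLt.le j)

def CDFAAux.suff {n : ℕ} (i : Fin n) (s : Fin n → σ) : Fin (n - (i.val + 1)) → σ :=
  fun j => s ⟨i.val + 1 + j.val, by have := j.isLt; omega⟩

def CDFAAux.glue {n : ℕ} (i : Fin n) (ℓ : σ) (p : Fin i.val → σ)
    (t : Fin (n - (i.val + 1)) → σ) : Fin n → σ := fun j =>
  if h : j.val < i.val then p ⟨j.val, h⟩
  else if _ : j.val = i.val then ℓ
  else t ⟨j.val - (i.val + 1), by have := j.isLt; omega⟩

namespace CDFAAux

lemma ofFn_decomp {n : ℕ} (s : Fin n → σ) (i : Fin n) :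
    List.ofFn s = List.ofFn (pref i s) ++ s i :: List.ofFn (suff i s) := by
  apply List.ext_getElem
  · simp [pref, suff]; omega
  intro k h1 h2
  rw [List.getElem_append]
  split
  · next h =>
    simp only [List.getElem_ofFn, pref]
    congr 1
  · next h =>
    simp only [List.length_ofFn] at h ⊢
    rw [List.getElem_cons]
    split
    · next h0 =>
      simp only [List.getElem_ofFn]
      congr 1
      apply Fin.ext
      simp only [List.length_ofFn] at h1
      simp
      omega
    · next h0 =>
      simp only [List.getElem_ofFn, suff]
      congr 1
      apply Fin.ext
      simp only [List.length_ofFn] at h1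
      simp
      omega

lemma glue_at {n : ℕ} (i : Fin n) (ℓ : σ) (p : Fin i.val → σ)
    (t : Fin (n - (i.val + 1)) → σ) : glue i ℓ p t i = ℓ := by
  simp [glue]

lemma pref_glue {n : ℕ} (i : Fin n) (ℓ : σ) (p : Fin i.val → σ)
    (t : Fin (n - (i.val + 1)) → σ) : pref i (glue i ℓ p t) = p := by
  funext j
  simp [pref, glue, j.isLt]

lemma suff_glue {n : ℕ} (i : Fin n) (ℓ : σ) (p : Fin i.val → σ)
    (t : Fin (n - (i.val + 1)) → σ) : suff i (glue i ℓ p t) = t := by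
  funext j
  have h1 : ¬ (i.val + 1 + j.val < i.val) := by omega
  have h2 : ¬ (i.val + 1 + j.val = i.val) := by omega
  simp only [suff, glue, dif_neg h1, dif_neg h2]
  congr 1
  exact Fin.ext (by simp)

lemma glue_mem {n : ℕ} (D : Fin n → Finset σ) (i : Fin n) (ℓ : σ) (hℓ : ℓ ∈ D i)
    (p : Fin i.val → σ) (hp : ∀ j, p j ∈ D (Fin.castLE i.isLt.le j))
    (t : Fin (n - (i.val + 1)) → σ)
    (ht : ∀ j : Fin (n - (i.val + 1)), t j ∈ D ⟨i.val + 1 + j.val, by have := j.isLt; omega⟩) :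
    ∀ j, glue i ℓ p t j ∈ D j := by
  intro j
  by_cases h : j.val < i.val
  · have := hp ⟨j.val, h⟩
    have hj : Fin.castLE i.isLt.le ⟨j.val, h⟩ = j := Fin.ext rfl
    rw [hj] at this
    simpa [glue, h] using this
  · by_cases h2 : j.val = i.val
    · have hj : j = i := Fin.ext h2
      subst hj
      simpa [glue, h, h2] using hℓ
    · have := ht ⟨j.val - (i.val + 1), by have := j.isLt; omega⟩
      have hj : (⟨i.val + 1 + (j.val - (i.val + 1)), by have := j.isLt; omega⟩ : Fin n) = j := by
        apply Fin.ext; simp; omega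
      rw [hj] at this
      simpa [glue, h, h2] using this

end CDFAAux
end Aux


/-- The minimum cost over all domain-consistent strings of length `n` whose `i`-th
symbol is `ℓ` equals `min_{q ∈ Q} (preMin(i−1,q) + inc + sufMin(i+1,q′))` where
`δ(q,ℓ) = (q′,inc)` (positions 0-based; both sides in `ℕ ∪ {∞}`). -/
theorem min_cost_eq_iInf_preMin_add_sufMin {Q σ : Type*} [Fintype Q] [Fintype σ]
    (A : CDFA Q σ) {n : ℕ} (D : Fin n → Finset σ) (hD : ∀ j, (D j).Nonempty)
    (i : Fin n) (ℓ : σ) (hℓ : ℓ ∈ D i) :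
    ((sInf {c : ℕ | ∃ s : Fin n → σ, (∀ j, s j ∈ D j) ∧ s i = ℓ ∧
        A.cost A.q0 (List.ofFn s) = c} : ℕ) : ℕ∞) =
      ⨅ q : Q, A.preMin D i.val i.isLt.le q + ((A.δ q ℓ).2 : ℕ∞) +
        (A.sufMin D (i.val + 1) (A.δ q ℓ).1 : ℕ∞) := by
  open CDFAAux in
  apply le_antisymm
  · apply le_iInf
    intro q
    by_cases hP : {c : ℕ∞ | ∃ s : Fin i.val → σ, (∀ j, s j ∈ D (Fin.castLE i.isLt.le j)) ∧
        A.run A.q0 (List.ofFn s) = q ∧ (A.cost A.q0 (List.ofFn s) : ℕ∞) = c}.Nonempty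
    · obtain ⟨p, hp, hrun, hcost⟩ := csInf_mem hP
      have hTne : {c : ℕ | ∃ s : Fin (n - (i.val + 1)) → σ,
          (∀ j : Fin (n - (i.val + 1)), s j ∈ D ⟨i.val + 1 + j.val, by have := j.isLt; omega⟩) ∧
          A.cost (A.δ q ℓ).1 (List.ofFn s) = c}.Nonempty :=
        ⟨_, fun j => (hD _).choose, fun j => (hD _).choose_spec, rfl⟩
      obtain ⟨t, ht, htc⟩ := Nat.sInf_mem hTne
      have hdecomp := CDFAAux.ofFn_decomp (CDFAAux.glue i ℓ p t) i
      rw [CDFAAux.glue_at, CDFAAux.pref_glue, CDFAAux.suff_glue] at hdecomp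
      have hcost_s : A.cost A.q0 (List.ofFn (CDFAAux.glue i ℓ p t))
          = A.cost A.q0 (List.ofFn p) + ((A.δ q ℓ).2 + A.cost (A.δ q ℓ).1 (List.ofFn t)) := by
        rw [hdecomp, CDFA.cost_append, hrun]
        simp [CDFA.cost]
      have hmem : A.cost A.q0 (List.ofFn (CDFAAux.glue i ℓ p t)) ∈
          {c : ℕ | ∃ s : Fin n → σ, (∀ j, s j ∈ D j) ∧ s i = ℓ ∧
            A.cost A.q0 (List.ofFn s) = c} :=
        ⟨_, CDFAAux.glue_mem D i ℓ hℓ p hp t ht, CDFAAux.glue_at i ℓ p t, rfl⟩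
      calc ((sInf _ : ℕ) : ℕ∞) ≤ (A.cost A.q0 (List.ofFn (CDFAAux.glue i ℓ p t)) : ℕ∞) := by
            exact_mod_cast Nat.sInf_le hmem
        _ = (A.cost A.q0 (List.ofFn p) : ℕ∞) + ((A.δ q ℓ).2 : ℕ∞)
              + (A.cost (A.δ q ℓ).1 (List.ofFn t) : ℕ∞) := by
            rw [hcost_s]; push_cast; ring
        _ = A.preMin D i.val i.isLt.le q + ((A.δ q ℓ).2 : ℕ∞)
              + (A.sufMin D (i.val + 1) (A.δ q ℓ).1 : ℕ∞) := by
            rw [CDFA.preMin, ← hcost, CDFA.sufMin, htc]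
    · rw [CDFA.preMin, Set.not_nonempty_iff_eq_empty.mp hP]
      simp [sInf_empty]
  · have hSne : {c : ℕ | ∃ s : Fin n → σ, (∀ j, s j ∈ D j) ∧ s i = ℓ ∧
        A.cost A.q0 (List.ofFn s) = c}.Nonempty := by
      refine ⟨_, fun j => if h : j = i then ℓ else (hD j).choose, fun j => ?_, by simp, rfl⟩
      by_cases h : j = i
      · subst h; simpa using hℓ
      · simpa [h] using (hD j).choose_spec
    obtain ⟨s, hs, hsi, hc⟩ := Nat.sInf_mem hSne
    have hdecomp := CDFAAux.ofFn_decomp s i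
    rw [hsi] at hdecomp
    obtain ⟨q, hq_def⟩ : ∃ q : Q, A.run A.q0 (List.ofFn (CDFAAux.pref i s)) = q := ⟨_, rfl⟩
    have hcost_s : A.cost A.q0 (List.ofFn s)
        = A.cost A.q0 (List.ofFn (CDFAAux.pref i s)) +
          ((A.δ q ℓ).2 + A.cost (A.δ q ℓ).1 (List.ofFn (CDFAAux.suff i s))) := by
      rw [hdecomp, CDFA.cost_append, hq_def]
      simp [CDFA.cost]
    refine iInf_le_of_le q ?_
    have h1 : A.preMin D i.val i.isLt.le q ≤ (A.cost A.q0 (List.ofFn (CDFAAux.pref i s)) : ℕ∞) :=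
      sInf_le ⟨CDFAAux.pref i s, fun j => hs _, hq_def, rfl⟩
    have h2 : (A.sufMin D (i.val + 1) (A.δ q ℓ).1 : ℕ∞)
        ≤ (A.cost (A.δ q ℓ).1 (List.ofFn (CDFAAux.suff i s)) : ℕ∞) := by
      rw [CDFA.sufMin]
      refine Nat.cast_le.mpr (Nat.sInf_le ?_)
      exact ⟨CDFAAux.suff i s, fun j => hs _, rfl⟩
    calc A.preMin D i.val i.isLt.le q + ((A.δ q ℓ).2 : ℕ∞)
          + (A.sufMin D (i.val + 1) (A.δ q ℓ).1 : ℕ∞)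
        ≤ (A.cost A.q0 (List.ofFn (CDFAAux.pref i s)) : ℕ∞) + ((A.δ q ℓ).2 : ℕ∞)
          + (A.cost (A.δ q ℓ).1 (List.ofFn (CDFAAux.suff i s)) : ℕ∞) :=
          add_le_add (add_le_add h1 le_rfl) h2
      _ = (A.cost A.q0 (List.ofFn s) : ℕ∞) := by rw [hcost_s]; push_cast; ring
      _ = _ := by rw [hc]
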